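/- arXiv:2107.12102 — 2 statements merged into one kernel-verified Lean document; each statement's English description precedes it below -/
import Mathlib

section
/- Let 0 < α < π/2 be fixed, and for integers D ≥ 1 define I_D(α) = ∫₀^α sin^D(x) dx. Then I_D(α) = sin^{D+1}(α)/(D cos(α)) − R_D, where 0 ≤ R_D ≤ sin^{D+1}(α)/(D cos³(α)); in particular, |I_D(α) − sin^{D+1}(α)/(D cos α)| ≤ sin^{D+1}(α)/(D cos³ α). -/
theorem stmt_5 (α : ℝ) (hα0 : 0 < α) (hα : α < Real.pi / 2) (D : ℕ) (hD : 1 ≤ D) :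
    ∃ R : ℝ,
      (∫ x in (0:ℝ)..α, Real.sin x ^ D) =
          Real.sin α ^ (D + 1) / (D * Real.cos α) - R ∧
      0 ≤ R ∧ R ≤ Real.sin α ^ (D + 1) / (D * Real.cos α ^ 3) ∧
      |(∫ x in (0:ℝ)..α, Real.sin x ^ D) - Real.sin α ^ (D + 1) / (D * Real.cos α)| ≤
        Real.sin α ^ (D + 1) / (D * Real.cos α ^ 3) := by
  have hpi := Real.pi_pos
  have hc : 0 < Real.cos α := Real.cos_pos_of_mem_Ioo ⟨by linarith, hα⟩
  have hc1 : Real.cos α ≤ 1 := Real.cos_le_one α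
  have hs : 0 < Real.sin α := Real.sin_pos_of_pos_of_lt_pi hα0 (by linarith)
  have hD0 : (0:ℝ) < (D:ℝ) := by exact_mod_cast hD
  have hsinnn : ∀ x ∈ Set.Icc (0:ℝ) α, 0 ≤ Real.sin x := by
    intro x hx
    exact Real.sin_nonneg_of_nonneg_of_le_pi hx.1 (by linarith [hx.2])
  set I := ∫ x in (0:ℝ)..α, Real.sin x ^ D with hIdef
  have hInonneg : 0 ≤ I := by
    apply intervalIntegral.integral_nonneg hα0.le
    intro x hx
    exact pow_nonneg (hsinnn x hx) D
  have hJ : (∫ x in (0:ℝ)..α, Real.sin x ^ D * Real.cos x)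
      = Real.sin α ^ (D + 1) / ((D:ℝ) + 1) := by
    have hderiv : ∀ x ∈ Set.uIcc (0:ℝ) α,
        HasDerivAt (fun y => Real.sin y ^ (D + 1) / ((D:ℝ) + 1))
          (Real.sin x ^ D * Real.cos x) x := by
      intro x _
      have h1 : HasDerivAt Real.sin (Real.cos x) x := Real.hasDerivAt_sin x
      have h2 := (h1.pow (D + 1)).div_const ((D:ℝ) + 1)
      convert h2 using 1
      · rfl
      · rfl
      · rfl
      have : ((D:ℝ) + 1) ≠ 0 := by positivity
      rw [Nat.add_sub_cancel]
      push_cast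
      rw [eq_div_iff this]
      ring
    have hint : IntervalIntegrable (fun x => Real.sin x ^ D * Real.cos x)
        MeasureTheory.volume 0 α :=
      (Continuous.mul (Real.continuous_sin.pow D) Real.continuous_cos).intervalIntegrable 0 α
    rw [intervalIntegral.integral_eq_sub_of_hasDerivAt hderiv hint]
    simp [Real.sin_zero, zero_pow (Nat.succ_ne_zero D)]
  have hmono : I * Real.cos α ≤ ∫ x in (0:ℝ)..α, Real.sin x ^ D * Real.cos x := by
    have heq : I * Real.cos α = ∫ x in (0:ℝ)..α, Real.sin x ^ D * Real.cos α :=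
      (intervalIntegral.integral_mul_const _ _).symm
    rw [heq]
    apply intervalIntegral.integral_mono_on hα0.le
    · exact (Continuous.mul (Real.continuous_sin.pow D) continuous_const).intervalIntegrable 0 α
    · exact (Continuous.mul (Real.continuous_sin.pow D) Real.continuous_cos).intervalIntegrable 0 α
    · intro x hx
      have hcx : Real.cos α ≤ Real.cos x :=
        Real.cos_le_cos_of_nonneg_of_le_pi hx.1 (by linarith) hx.2
      exact mul_le_mul_of_nonneg_left hcx (pow_nonneg (hsinnn x hx) D)
  have hupper : I ≤ Real.sin α ^ (D + 1) / ((D:ℝ) * Real.cos α) := by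
    have h1 : I ≤ Real.sin α ^ (D + 1) / (((D:ℝ) + 1) * Real.cos α) := by
      rw [le_div_iff₀ (by positivity)]
      calc I * (((D:ℝ) + 1) * Real.cos α) = I * Real.cos α * ((D:ℝ) + 1) := by ring
        _ ≤ (Real.sin α ^ (D + 1) / ((D:ℝ) + 1)) * ((D:ℝ) + 1) := by
            rw [← hJ]; exact mul_le_mul_of_nonneg_right hmono (by positivity)
        _ = Real.sin α ^ (D + 1) := by field_simp
      -- fix associativity
    calc I ≤ Real.sin α ^ (D + 1) / (((D:ℝ) + 1) * Real.cos α) := h1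
      _ ≤ Real.sin α ^ (D + 1) / ((D:ℝ) * Real.cos α) := by
          apply div_le_div_of_nonneg_left (by positivity) (by positivity)
          nlinarith
  have hc3 : Real.cos α ^ 3 ≤ Real.cos α := by nlinarith [sq_nonneg (Real.cos α)]
  have hL : Real.sin α ^ (D + 1) / ((D:ℝ) * Real.cos α)
      ≤ Real.sin α ^ (D + 1) / ((D:ℝ) * Real.cos α ^ 3) := by
    apply div_le_div_of_nonneg_left (by positivity) (by positivity)
    exact mul_le_mul_of_nonneg_left hc3 hD0.le
  refine ⟨Real.sin α ^ (D + 1) / ((D:ℝ) * Real.cos α) - I, by ring, by linarith, ?_, ?_⟩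
  · linarith
  · rw [abs_sub_comm, abs_of_nonneg (by linarith)]
    linarith
end

section
/- Let 0 < α < π/2 and D ≥ 1 an integer. Then 0 < ∫₀^α sin^D(x)/cos²(x) dx ≤ sin^{D+1}(α)/(D cos³(α)). -/
theorem stmt_6 (α : ℝ) (hα0 : 0 < α) (hα : α < Real.pi / 2) (D : ℕ) (hD : 1 ≤ D) :
    0 < (∫ x in (0:ℝ)..α, Real.sin x ^ D / Real.cos x ^ 2) ∧
    (∫ x in (0:ℝ)..α, Real.sin x ^ D / Real.cos x ^ 2) ≤
      Real.sin α ^ (D + 1) / (D * Real.cos α ^ 3) := by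
  have hπ := Real.pi_pos
  have hcos : ∀ x ∈ Set.Icc (0:ℝ) α, 0 < Real.cos x := by
    intro x hx
    exact Real.cos_pos_of_mem_Ioo ⟨by linarith [hx.1], by linarith [hx.2]⟩
  have hsin : ∀ x ∈ Set.Icc (0:ℝ) α, 0 ≤ Real.sin x := by
    intro x hx
    exact Real.sin_nonneg_of_nonneg_of_le_pi hx.1 (by linarith [hx.2])
  have huIcc : Set.uIcc (0:ℝ) α = Set.Icc 0 α := Set.uIcc_of_le hα0.le
  have hf_cont : ContinuousOn (fun x => Real.sin x ^ D / Real.cos x ^ 2) (Set.Icc 0 α) := by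
    apply ContinuousOn.div (by fun_prop) (by fun_prop)
    intro x hx
    exact pow_ne_zero _ (hcos x hx).ne'
  have hf_int : IntervalIntegrable (fun x => Real.sin x ^ D / Real.cos x ^ 2)
      MeasureTheory.volume 0 α := by
    apply ContinuousOn.intervalIntegrable; rwa [huIcc]
  have hDpos : (0:ℝ) < D := by exact_mod_cast hD
  constructor
  · apply intervalIntegral.intervalIntegral_pos_of_pos_on hf_int _ hα0
    intro x hx
    have hs : 0 < Real.sin x := Real.sin_pos_of_pos_of_lt_pi hx.1 (by linarith [hx.2])
    have hc := hcos x ⟨hx.1.le, hx.2.le⟩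
    positivity
  · set g : ℝ → ℝ := fun x =>
      ((D+1) * Real.sin x ^ D * Real.cos x ^ 4 + 3 * Real.sin x ^ (D+2) * Real.cos x ^ 2)
        / Real.cos x ^ 6 with hg
    have hderiv : ∀ x ∈ Set.uIcc (0:ℝ) α,
        HasDerivAt (fun y => Real.sin y ^ (D+1) / Real.cos y ^ 3) (g x) x := by
      intro x hx
      rw [huIcc] at hx
      have hc := hcos x hx
      have h1 : HasDerivAt (fun y => Real.sin y ^ (D+1))
          (((D:ℝ)+1) * Real.sin x ^ D * Real.cos x) x := by
        have h := (Real.hasDerivAt_sin x).pow (D+1)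
        exact h.congr_deriv (by push_cast; simp [Nat.add_sub_cancel])
      have h2 : HasDerivAt (fun y => Real.cos y ^ 3)
          (3 * Real.cos x ^ 2 * (-Real.sin x)) x := by
        have h := (Real.hasDerivAt_cos x).pow 3
        exact h.congr_deriv (by norm_num)
      have h := h1.div h2 (pow_ne_zero 3 hc.ne')
      refine h.congr_deriv ?_
      symm
      rw [hg]
      field_simp
      ring_nf
    have hg_cont : ContinuousOn g (Set.Icc 0 α) := by
      apply ContinuousOn.div (by fun_prop) (by fun_prop)
      intro x hx
      exact pow_ne_zero _ (hcos x hx).ne'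
    have hg_int : IntervalIntegrable g MeasureTheory.volume 0 α := by
      apply ContinuousOn.intervalIntegrable; rwa [huIcc]
    have hFTC : (∫ x in (0:ℝ)..α, g x) = Real.sin α ^ (D+1) / Real.cos α ^ 3 := by
      rw [intervalIntegral.integral_eq_sub_of_hasDerivAt hderiv hg_int]
      simp [Real.sin_zero, zero_pow (Nat.succ_ne_zero D)]
    have hmono : (∫ x in (0:ℝ)..α, Real.sin x ^ D / Real.cos x ^ 2)
        ≤ ∫ x in (0:ℝ)..α, g x / D := by
      apply intervalIntegral.integral_mono_on hα0.le hf_int (hg_int.div_const _)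
      intro x hx
      have hc := hcos x hx
      have hs := hsin x hx
      rw [le_div_iff₀ hDpos, hg, div_mul_eq_mul_div, div_le_div_iff₀ (by positivity) (by positivity)]
      have h1 : (0:ℝ) ≤ Real.sin x ^ D * Real.cos x ^ 6 := by positivity
      have h2 : (0:ℝ) ≤ Real.sin x ^ (D+2) * Real.cos x ^ 4 := by positivity
      nlinarith [h1, h2]
    have : (∫ x in (0:ℝ)..α, g x / D) = Real.sin α ^ (D+1) / (D * Real.cos α ^ 3) := by
      rw [intervalIntegral.integral_div, hFTC]
      rw [div_div, mul_comm]
    linarith [hmono, this.le, this.ge]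
end
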